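/- Let k be a normed division ring, n ≥ 1, and a_1,…,a_n ∈ k. Define P and Q on suffixes by P[] = 0, Q[] = 1 for the empty list, and P[a_i,…,a_n] = Q[a_{i+1},…,a_n], Q[a_i,…,a_n] = a_i·Q[a_{i+1},…,a_n] + P[a_{i+1},…,a_n]. Suppose Q[a_i,…,a_n] ≠ 0 for every 1 ≤ i ≤ n. Then ∏_{i=0}^{n−1} ‖P[a_{i+1},…,a_n]·(Q[a_{i+1},…,a_n])⁻¹‖ = ‖Q[a_1,…,a_n]‖⁻¹. -/

import Mathlib

/-- `(P l, Q l)` for a digit list `l = [a_i, …, a_n]`: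
`P [] = 0`, `Q [] = 1`, `P (a :: l) = Q l`, `Q (a :: l) = a * Q l + P l`. -/
def cfPQ {k : Type*} [DivisionRing k] : List k → k × k
  | [] => (0, 1)
  | a :: l => ((cfPQ l).2, a * (cfPQ l).2 + (cfPQ l).1)

/-- The digit list `[a_i, a_{i+1}, …, a_n]`. -/
def suffList {k : Type*} (a : ℕ → k) (i n : ℕ) : List k :=
  (List.range (n + 1 - i)).map (fun j => a (i + j))

lemma suffList_cons {k : Type*} (a : ℕ → k) {i n : ℕ} (h : i ≤ n) :
    suffList a i n = a i :: suffList a (i + 1) n := by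
  unfold suffList
  have h1 : n + 1 - i = (n - i) + 1 := by omega
  have h2 : n + 1 - (i + 1) = n - i := by omega
  rw [h1, h2, List.range_succ_eq_map, List.map_cons, List.map_map]
  congr 1
  apply List.map_congr_left
  intro j _
  simp only [Function.comp_apply]
  congr 1
  omega

lemma suffList_nil {k : Type*} (a : ℕ → k) (n : ℕ) : suffList a (n + 1) n = [] := by
  simp [suffList]

/-- Lemma 2.3 (productisQ) of the paper: the product of the norms of the tail
convergents telescopes to `‖Q[a_1,…,a_n]‖⁻¹`. -/
theorem cf_product_is_Q {k : Type*} [NormedDivisionRing k]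
    (n : ℕ) (hn : 1 ≤ n) (a : ℕ → k)
    (hQ : ∀ i, 1 ≤ i → i ≤ n → (cfPQ (suffList a i n)).2 ≠ 0) :
    (∏ i ∈ Finset.range n,
        ‖(cfPQ (suffList a (i + 1) n)).1 * ((cfPQ (suffList a (i + 1) n)).2)⁻¹‖)
      = ‖(cfPQ (suffList a 1 n)).2‖⁻¹ := by
  set f : ℕ → ℝ := fun i => ‖(cfPQ (suffList a (i + 1) n)).2‖ with hf
  have hfne : ∀ i, i + 1 ≤ n → f i ≠ 0 := by
    intro i hi
    simpa [hf] using hQ (i + 1) (by omega) hi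
  have hP : ∀ i, i + 1 ≤ n →
      (cfPQ (suffList a (i + 1) n)).1 = (cfPQ (suffList a (i + 2) n)).2 := by
    intro i hi
    rw [suffList_cons a hi, cfPQ]
  have key : ∀ m, m ≤ n →
      (∏ i ∈ Finset.range m,
        ‖(cfPQ (suffList a (i + 1) n)).1 * ((cfPQ (suffList a (i + 1) n)).2)⁻¹‖)
      = f m * (f 0)⁻¹ := by
    intro m hm
    induction m with
    | zero => simp [mul_inv_cancel₀ (hfne 0 hn)]
    | succ m ih =>
      rw [Finset.prod_range_succ, ih (by omega), norm_mul, norm_inv,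
        hP m (by omega)]
      have : ‖(cfPQ (suffList a (m + 2) n)).2‖ = f (m + 1) := rfl
      rw [this]
      have hm' : ‖(cfPQ (suffList a (m + 1) n)).2‖ = f m := rfl
      rw [hm']
      field_simp [hfne m (by omega), hfne 0 hn]
  rw [key n le_rfl]
  have : f n = 1 := by simp [hf, suffList_nil, cfPQ]
  rw [this, one_mul]
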